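/- For every integer k ≥ 2, Bob (the second player) has a winning strategy in the feedback game on the graph G_k with starting vertex s. -/

import Mathlib

set_option linter.unusedSectionVars false
set_option linter.unusedVariables false
set_option maxHeartbeats 1000000

/-- `FeedbackWin st E u` : the player to move wins the feedback game with starting
vertex `st`, remaining (unused) edges `E`, and token currently on `u`.  The player
to move wins iff they can move the token along some remaining edge `{u, v}` (which
is then deleted) so that either `v` is the starting vertex `st`, or `v` is incident
with no remaining edge, or the resulting position is a loss for the opponent
(who is then the player to move).  This is a well-founded recursion on the finite
set of remaining edges. -/
def FeedbackWin {V : Type*} [DecidableEq V] (st : V) (E : Finset (Sym2 V)) (u : V) : Prop :=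
  ∃ v, ∃ _hmem : Sym2.mk u v ∈ E,
    v = st ∨ (∀ e ∈ E.erase (Sym2.mk u v), v ∉ e) ∨
      ¬ FeedbackWin st (E.erase (Sym2.mk u v)) v
termination_by E.card
decreasing_by exact Finset.card_erase_lt_of_mem _hmem

/-- Alice (the first player) has a winning strategy in the feedback game on the
finite graph `G` with starting vertex `st`. -/
def AliceWins {V : Type*} [Finite V] [DecidableEq V] (G : SimpleGraph V) (st : V) : Prop :=
  FeedbackWin st G.edgeSet.toFinite.toFinset st

/-- Bob (the second player) has a winning strategy in the feedback game on the
finite graph `G` with starting vertex `st`.  The feedback game is a finite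
two-player game without draws, so by Zermelo determinacy this is equivalent to
Alice not having a winning strategy. -/
def BobWins {V : Type*} [Finite V] [DecidableEq V] (G : SimpleGraph V) (st : V) : Prop :=
  ¬ AliceWins G st

/-- Vertices of the graph `G_k`: `some (Sum.inl i)` is the cycle vertex `u i`
(`i ∈ ZMod (2k)`), `some (Sum.inr j)` is the cycle vertex `v j` (`j ∈ ZMod (4k)`),
and `none` is the starting vertex `s`. -/
abbrev GkVert (k : ℕ) : Type := Option (ZMod (2 * k) ⊕ ZMod (4 * k))

/-- Base relation generating the edges of `G_k`: the cycle `u_0 u_1 … u_{2k-1}`,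
the cycle `v_0 v_1 … v_{4k-1}`, the edges `u_i v_{2i}` and `u_i v_{2i+1}`, and
the edges `s v_j` for every `j`. -/
def GkRel (k : ℕ) : GkVert k → GkVert k → Prop
  | some (Sum.inl i), some (Sum.inl i') => i' = i + 1
  | some (Sum.inr j), some (Sum.inr j') => j' = j + 1
  | some (Sum.inl i), some (Sum.inr j) =>
      j = ((2 * i.val : ℕ) : ZMod (4 * k)) ∨ j = ((2 * i.val + 1 : ℕ) : ZMod (4 * k))
  | none, some (Sum.inr _) => True
  | _, _ => False

/-- The graph `G_k` from the paper (Proposition on graphs without even kernel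
graphs on which Bob wins). -/
def GkGraph (k : ℕ) : SimpleGraph (GkVert k) := SimpleGraph.fromRel (GkRel k)

/-- The starting vertex `s` of `G_k`. -/
def gkStart (k : ℕ) : GkVert k := none

theorem FeedbackWin_iff {V : Type*} [DecidableEq V] (st : V) (E : Finset (Sym2 V)) (u : V) :
    FeedbackWin st E u ↔ ∃ v, ∃ _hmem : s(u, v) ∈ E,
    v = st ∨ (∀ e ∈ E.erase (s(u, v)), v ∉ e) ∨
      ¬ FeedbackWin st (E.erase (s(u, v))) v := by
  rw [FeedbackWin]

lemma win_to_start {V : Type*} [DecidableEq V] {st u : V} {E : Finset (Sym2 V)}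
    (h : s(u, st) ∈ E) : FeedbackWin st E u :=
  (FeedbackWin_iff _ _ _).mpr ⟨st, h, Or.inl rfl⟩

section
variable {k : ℕ} [NeZero (2*k)] [NeZero (4*k)] {j : ZMod (4*k)} {d : ZMod (2*k)}

local notation "Uv" i => (some (Sum.inl i) : Option (ZMod (2*k) ⊕ ZMod (4*k)))
local notation "Wv" j => (some (Sum.inr j) : Option (ZMod (2*k) ⊕ ZMod (4*k)))

lemma my_cast_eq_zero_iff {n a : ℕ} : ((a : ℕ) : ZMod n) = 0 ↔ n ∣ a :=
  ZMod.natCast_eq_zero_iff a n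

lemma my_cast_ne_zero {n a : ℕ} (h1 : 0 < a) (h2 : a < n) : ((a : ℕ) : ZMod n) ≠ 0 := by
  intro h
  rw [my_cast_eq_zero_iff] at h
  exact absurd (Nat.le_of_dvd h1 h) (by omega)

lemma my_one_ne_zero {n : ℕ} (hn : 2 ≤ n) : (1 : ZMod n) ≠ 0 := by
  have := my_cast_ne_zero (n := n) (a := 1) one_pos (by omega)
  simpa using this

lemma my_two_ne_zero {n : ℕ} (hn : 3 ≤ n) : (2 : ZMod n) ≠ 0 := by
  have := my_cast_ne_zero (n := n) (a := 2) two_pos (by omega)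
  simpa using this

lemma my_cast_inj {n a b : ℕ} (ha : a < n) (hb : b < n) (h : ((a : ℕ) : ZMod n) = b) : a = b := by
  haveI : NeZero n := ⟨by omega⟩
  rw [← ZMod.val_cast_of_lt ha, ← ZMod.val_cast_of_lt hb, h]

lemma gk_adj (a b) : (GkGraph k).Adj a b ↔ a ≠ b ∧ (GkRel k a b ∨ GkRel k b a) := by
  simp [GkGraph, SimpleGraph.fromRel_adj]

-- elimination lemmas
lemma adj_none_cases {v} (h : (GkGraph k).Adj none v) : ∃ m, v = (Wv m) := by
  rcases v with _ | (i | m) <;> simp_all [gk_adj, GkRel]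

lemma adj_inl_cases {w : ZMod (2*k)} {v} (h : (GkGraph k).Adj (Uv w) v) :
    v = (Uv (w+1)) ∨ v = (Uv (w-1)) ∨ v = (Wv ((2*w.val : ℕ) : ZMod (4*k)))
      ∨ v = (Wv ((2*w.val+1 : ℕ) : ZMod (4*k))) := by
  rw [gk_adj] at h
  obtain ⟨hne, h | h⟩ := h
  · rcases v with _ | (i | m)
    · exact h.elim
    · exact Or.inl (by rw [show i = w + 1 from h])
    · rcases (show m = ((2*w.val : ℕ) : ZMod (4*k)) ∨ m = ((2*w.val+1 : ℕ) : ZMod (4*k)) from h) with h | h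
      · exact Or.inr (Or.inr (Or.inl (by rw [h])))
      · exact Or.inr (Or.inr (Or.inr (by rw [h])))
  · rcases v with _ | (i | m)
    · exact h.elim
    · exact Or.inr (Or.inl (by rw [show w = i + 1 from h]; ring_nf))
    · exact h.elim

lemma adj_inr_cases {m : ZMod (4*k)} {v} (h : (GkGraph k).Adj (Wv m) v) :
    v = (Wv (m+1)) ∨ v = (Wv (m-1)) ∨ v = none
      ∨ ∃ w : ZMod (2*k), v = (Uv w) ∧
        (m = ((2*w.val : ℕ) : ZMod (4*k)) ∨ m = ((2*w.val+1 : ℕ) : ZMod (4*k))) := by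
  rw [gk_adj] at h
  obtain ⟨hne, h | h⟩ := h
  · rcases v with _ | (i | m')
    · exact h.elim
    · exact h.elim
    · exact Or.inl (by rw [show m' = m + 1 from h])
  · rcases v with _ | (i | m')
    · exact Or.inr (Or.inr (Or.inl rfl))
    · exact Or.inr (Or.inr (Or.inr ⟨i, rfl, h⟩))
    · exact Or.inr (Or.inl (by rw [show m = m' + 1 from h]; ring_nf))

-- introduction lemmas
lemma adj_inl_succ (hk : 2 ≤ k) (w : ZMod (2*k)) : (GkGraph k).Adj (Uv w) (Uv (w+1)) := by
  rw [gk_adj]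
  refine ⟨?_, Or.inl (show w + 1 = w + 1 from rfl)⟩
  intro he
  rw [Option.some_inj, Sum.inl.injEq] at he
  exact my_one_ne_zero (n := 2*k) (by omega) (by linear_combination -he)

lemma adj_inl_pred (hk : 2 ≤ k) (w : ZMod (2*k)) : (GkGraph k).Adj (Uv w) (Uv (w-1)) := by
  have := ((GkGraph k).adj_symm (adj_inl_succ hk (w-1)))
  simpa using this

lemma adj_spoke (w : ZMod (2*k)) (m : ZMod (4*k))
    (hm : m = ((2*w.val : ℕ) : ZMod (4*k)) ∨ m = ((2*w.val+1 : ℕ) : ZMod (4*k))) :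
    (GkGraph k).Adj (Uv w) (Wv m) := by
  rw [gk_adj]
  exact ⟨by simp, Or.inl hm⟩

lemma adj_start (m : ZMod (4*k)) : (GkGraph k).Adj (Wv m) none := by
  rw [gk_adj]
  exact ⟨by simp, Or.inr trivial⟩

lemma adj_outer_succ (hk : 2 ≤ k) (m : ZMod (4*k)) : (GkGraph k).Adj (Wv m) (Wv (m+1)) := by
  rw [gk_adj]
  refine ⟨?_, Or.inl (show m + 1 = m + 1 from rfl)⟩
  intro he
  rw [Option.some_inj, Sum.inr.injEq] at he
  exact my_one_ne_zero (n := 4*k) (by omega) (by linear_combination -he)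


-- ============ strategy-specific definitions ============

/-- index of the inner vertex matched to outer vertex `j` -/
def iIdx (k : ℕ) (j : ZMod (4*k)) : ZMod (2*k) := ((j.val / 2 : ℕ) : ZMod (2*k))

noncomputable def E0 (k : ℕ) [NeZero (2*k)] [NeZero (4*k)] : Finset (Sym2 (Option (ZMod (2*k) ⊕ ZMod (4*k)))) :=
  (GkGraph k).edgeSet.toFinite.toFinset

def sEdge (k : ℕ) (j : ZMod (4*k)) : Sym2 (Option (ZMod (2*k) ⊕ ZMod (4*k))) :=
  s(none, some (Sum.inr j))

def spEdge (k : ℕ) (j : ZMod (4*k)) : Sym2 (Option (ZMod (2*k) ⊕ ZMod (4*k))) :=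
  s(some (Sum.inl (iIdx k j)), some (Sum.inr j))

/-- position of the token after `t` steps of the inner-cycle march -/
def wp (k : ℕ) (j : ZMod (4*k)) (d : ZMod (2*k)) (t : ℕ) : ZMod (2*k) := iIdx k j + d*(t:ℕ)

/-- the `t`-th inner cycle edge of the march -/
def cycE (k : ℕ) (j : ZMod (4*k)) (d : ZMod (2*k)) (t : ℕ) :
    Sym2 (Option (ZMod (2*k) ⊕ ZMod (4*k))) :=
  s(some (Sum.inl (wp k j d t)), some (Sum.inl (wp k j d (t+1))))

def usedF (k : ℕ) (j : ZMod (4*k)) (d : ZMod (2*k)) (t : ℕ) :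
    Finset (Sym2 (Option (ZMod (2*k) ⊕ ZMod (4*k)))) :=
  insert (sEdge k j) (insert (spEdge k j) ((Finset.range t).image (cycE k j d)))

noncomputable def Rt (k : ℕ) [NeZero (2*k)] [NeZero (4*k)] (j : ZMod (4*k)) (d : ZMod (2*k)) (t : ℕ) :
    Finset (Sym2 (Option (ZMod (2*k) ⊕ ZMod (4*k)))) :=
  E0 k \ usedF k j d t

lemma mem_E0 {a b} : s(a, b) ∈ E0 k ↔ (GkGraph k).Adj a b := by
  rw [E0, Set.Finite.mem_toFinset, SimpleGraph.mem_edgeSet]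

-- spoke index arithmetic
lemma iIdx_spoke (j : ZMod (4*k)) :
    j = ((2 * (iIdx k j).val : ℕ) : ZMod (4*k)) ∨ j = ((2 * (iIdx k j).val + 1 : ℕ) : ZMod (4*k)) := by
  have hjv : j.val < 4*k := ZMod.val_lt j
  have h2 : (iIdx k j).val = j.val / 2 := by
    rw [iIdx, ZMod.val_cast_of_lt (by omega)]
  rw [h2]
  rcases Nat.even_or_odd j.val with he | ho
  · left
    rw [show 2 * (j.val / 2) = j.val by rcases he with ⟨c, hc⟩; omega]
    exact (ZMod.natCast_zmod_val j).symm
  · right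
    rw [show 2 * (j.val / 2) + 1 = j.val by rcases ho with ⟨c, hc⟩; omega]
    exact (ZMod.natCast_zmod_val j).symm

lemma spoke_unique {w : ZMod (2*k)} {m : ZMod (4*k)}
    (hm : m = ((2 * w.val : ℕ) : ZMod (4*k)) ∨ m = ((2 * w.val + 1 : ℕ) : ZMod (4*k))) :
    w = iIdx k m := by
  have hwv : w.val < 2*k := ZMod.val_lt w
  rcases hm with hm | hm
  · have : m.val = 2 * w.val := by rw [hm, ZMod.val_cast_of_lt (by omega)]
    rw [iIdx, this, Nat.mul_div_cancel_left _ two_pos, ZMod.natCast_zmod_val]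
  · have : m.val = 2 * w.val + 1 := by rw [hm, ZMod.val_cast_of_lt (by omega)]
    rw [iIdx, this, show (2*w.val+1)/2 = w.val by omega, ZMod.natCast_zmod_val]


-- ===== march arithmetic =====

lemma dd (hd : d = 1 ∨ d = -1) : d * d = 1 := by rcases hd with rfl | rfl <;> ring

lemma wp_succ (t : ℕ) : wp k j d (t+1) = wp k j d t + d := by
  rw [wp, wp]; push_cast; ring

lemma wp_zero : wp k j d 0 = iIdx k j := by simp [wp]

lemma wp_cancel (hd : d = 1 ∨ d = -1) {t t' : ℕ} (h : wp k j d t = wp k j d t') :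
    ((t : ℕ) : ZMod (2*k)) = ((t' : ℕ) : ZMod (2*k)) := by
  have h2 : d * (t : ℕ) = d * (t' : ℕ) := by
    have := h; rw [wp, wp] at this
    linear_combination this
  calc ((t : ℕ) : ZMod (2*k)) = (d*d) * (t:ℕ) := by rw [dd hd]; ring
    _ = (d*d) * (t':ℕ) := by rw [mul_assoc, mul_assoc, h2]
    _ = ((t' : ℕ) : ZMod (2*k)) := by rw [dd hd]; ring

lemma wp_inj (hd : d = 1 ∨ d = -1) {t t' : ℕ} (ht : t < 2*k) (ht' : t' < 2*k)
    (h : wp k j d t = wp k j d t') : t = t' :=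
  my_cast_inj ht ht' (wp_cancel hd h)

lemma wp_eq_iIdx (hd : d = 1 ∨ d = -1) {t : ℕ} (ht : t ≤ 2*k) :
    wp k j d t = iIdx k j ↔ (t = 0 ∨ t = 2*k) := by
  constructor
  · intro h
    rw [← wp_zero (d := d)] at h
    have := wp_cancel hd h
    rw [show ((0:ℕ) : ZMod (2*k)) = 0 by simp, my_cast_eq_zero_iff] at this
    rcases Nat.eq_zero_or_pos t with h0 | hpos
    · exact Or.inl h0
    · right
      have := Nat.le_of_dvd hpos this
      omega
  · rintro (rfl | rfl)
    · exact wp_zero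
    · rw [wp, show (((2*k : ℕ)) : ZMod (2*k)) = 0 from ZMod.natCast_self _]
      ring

lemma wp_wrap : wp k j d (2*k) = wp k j d 0 := by
  rw [wp, wp, show (((2*k : ℕ)) : ZMod (2*k)) = 0 from ZMod.natCast_self _]
  simp

lemma cycE_wrap : cycE k j d (2*k) = cycE k j d 0 := by
  rw [cycE, cycE, wp_wrap, wp_succ, wp_succ, wp_wrap]

lemma two_d_ne (hk : 2 ≤ k) (hd : d = 1 ∨ d = -1) {a : ZMod (2*k)} (h : a + d = a - d) : False := by
  have h2 : (2 : ZMod (2*k)) * d = 0 := by linear_combination h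
  have h3 : (2 : ZMod (2*k)) = 0 := by
    calc (2 : ZMod (2*k)) = 2 * (d * d) := by rw [dd hd]; ring
      _ = (2 * d) * d := by ring
      _ = 0 := by rw [h2]; ring
  exact my_two_ne_zero (by omega) h3

lemma cycE_inj (hk : 2 ≤ k) (hd : d = 1 ∨ d = -1) {r t : ℕ} (hr : r < 2*k) (ht : t < 2*k)
    (h : cycE k j d r = cycE k j d t) : r = t := by
  rw [cycE, cycE, Sym2.eq_iff] at h
  rcases h with ⟨h1, _⟩ | ⟨h1, h2⟩
  · simp only [Option.some_inj, Sum.inl.injEq] at h1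
    exact wp_inj hd hr ht h1
  · simp only [Option.some_inj, Sum.inl.injEq] at h1 h2
    exfalso
    rw [wp_succ] at h1 h2
    apply two_d_ne hk hd (a := wp k j d r)
    linear_combination h2 - h1

-- membership in usedF
lemma mem_usedF {e} {t : ℕ} :
    e ∈ usedF k j d t ↔ e = sEdge k j ∨ e = spEdge k j ∨ ∃ r < t, cycE k j d r = e := by
  simp [usedF, Finset.mem_insert, Finset.mem_image, Finset.mem_range]

lemma cycE_not_used (hk : 2 ≤ k) (hd : d = 1 ∨ d = -1) {t : ℕ} (ht : t < 2*k) :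
    cycE k j d t ∉ usedF k j d t := by
  rw [mem_usedF]
  rintro (h | h | ⟨r, hr, h⟩)
  · rw [cycE, sEdge, Sym2.eq_iff] at h; simp at h
  · rw [cycE, spEdge, Sym2.eq_iff] at h; simp at h
  · exact absurd (cycE_inj hk hd (by omega) ht h) (by omega)

lemma cycE_mem_used {r t : ℕ} (hr : r < t) : cycE k j d r ∈ usedF k j d t :=
  mem_usedF.mpr (Or.inr (Or.inr ⟨r, hr, rfl⟩))

lemma sEdge'_not_used {m : ZMod (4*k)} (hm : m ≠ j) {t : ℕ} :
    s((Wv m), (none : Option (ZMod (2*k) ⊕ ZMod (4*k)))) ∉ usedF k j d t := by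
  rw [mem_usedF]
  rintro (h | h | ⟨r, hr, h⟩)
  · rw [sEdge, Sym2.eq_iff] at h
    simp only [Option.some_inj, Sum.inr.injEq, reduceCtorEq] at h
    tauto
  · rw [spEdge, Sym2.eq_iff] at h; simp at h
  · rw [cycE, Sym2.eq_iff] at h; simp at h

lemma spoke_not_used {w : ZMod (2*k)} {m : ZMod (4*k)} (hwm : ¬(w = iIdx k j ∧ m = j)) {t : ℕ} :
    s((Uv w), (Wv m)) ∉ usedF k j d t := by
  rw [mem_usedF]
  rintro (h | h | ⟨r, hr, h⟩)
  · rw [sEdge, Sym2.eq_iff] at h; simp at h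
  · rw [spEdge, Sym2.eq_iff] at h
    simp only [Option.some_inj, Sum.inl.injEq, Sum.inr.injEq, reduceCtorEq] at h
    tauto
  · rw [cycE, Sym2.eq_iff] at h; simp at h

lemma sEdge_mem_used {t : ℕ} : sEdge k j ∈ usedF k j d t := mem_usedF.mpr (Or.inl rfl)
lemma spEdge_mem_used {t : ℕ} : spEdge k j ∈ usedF k j d t := mem_usedF.mpr (Or.inr (Or.inl rfl))

-- Rt lemmas
lemma mem_Rt {e} {t : ℕ} : e ∈ Rt k j d t ↔ e ∈ E0 k ∧ e ∉ usedF k j d t := Finset.mem_sdiff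

lemma Rt_erase (t : ℕ) : (Rt k j d t).erase (cycE k j d t) = Rt k j d (t+1) := by
  ext e
  simp only [Finset.mem_erase, mem_Rt, mem_usedF, Finset.mem_range]
  constructor
  · rintro ⟨hne, he0, hnu⟩
    refine ⟨he0, ?_⟩
    rintro (h | h | ⟨r, hr, h⟩)
    · exact hnu (Or.inl h)
    · exact hnu (Or.inr (Or.inl h))
    · rcases Nat.lt_or_ge r t with h2 | h2
      · exact hnu (Or.inr (Or.inr ⟨r, h2, h⟩))
      · have : r = t := by omega
        subst this
        exact hne h.symm
  · rintro ⟨he0, hnu⟩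
    refine ⟨?_, he0, ?_⟩
    · intro h
      exact hnu (Or.inr (Or.inr ⟨t, by omega, h.symm⟩))
    · rintro (h | h | ⟨r, hr, h⟩)
      · exact hnu (Or.inl h)
      · exact hnu (Or.inr (Or.inl h))
      · exact hnu (Or.inr (Or.inr ⟨r, by omega, h⟩))

lemma Rt_zero_indep (d' : ZMod (2*k)) : Rt k j d 0 = Rt k j d' 0 := by
  ext e; simp [Rt, usedF]

lemma Rt_init : ((E0 k).erase (sEdge k j)).erase (spEdge k j) = Rt k j d 0 := by
  ext e
  simp only [Finset.mem_erase, mem_Rt, mem_usedF]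
  constructor
  · rintro ⟨h2, h1, he0⟩
    exact ⟨he0, by rintro (h | h | ⟨r, hr, h⟩) <;> simp_all⟩
  · rintro ⟨he0, hnu⟩
    exact ⟨fun h => hnu (Or.inr (Or.inl h)), fun h => hnu (Or.inl h), he0⟩

-- ===== the main game analysis =====

lemma pm_to_d (hd : d = 1 ∨ d = -1) (w : ZMod (2*k)) {v}
    (h : v = (Uv (w+1)) ∨ v = (Uv (w-1))) : v = (Uv (w+d)) ∨ v = (Uv (w-d)) := by
  rcases hd with rfl | rfl
  · exact h
  · rcases h with h | h
    · right; rw [h]; simp [sub_eq_add_neg]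
    · left; rw [h]; simp [sub_eq_add_neg]

lemma adj_step (hk : 2 ≤ k) (hd : d = 1 ∨ d = -1) (w : ZMod (2*k)) :
    (GkGraph k).Adj (Uv w) (Uv (w+d)) := by
  rcases hd with rfl | rfl
  · exact adj_inl_succ hk w
  · have := adj_inl_pred hk w
    simpa [sub_eq_add_neg] using this

lemma backward_used (hd : d = 1 ∨ d = -1) {t : ℕ} (ht : 1 ≤ t) :
    s((Uv (wp k j d t)), (Uv (wp k j d t - d))) ∈ usedF k j d t := by
  have h1 : wp k j d (t-1) = wp k j d t - d := by
    have h2 := wp_succ (k := k) (j := j) (d := d) (t-1)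
    rw [show t-1+1 = t by omega] at h2
    linear_combination -h2
  have h3 : cycE k j d (t-1) = s((Uv (wp k j d t - d)), (Uv (wp k j d t))) := by
    rw [cycE, show t-1+1 = t by omega, h1]
  have h4 : s((Uv (wp k j d t)), (Uv (wp k j d t - d))) = cycE k j d (t-1) := by
    rw [h3, Sym2.eq_swap]
  rw [h4]
  exact cycE_mem_used (by omega)

/-- refutation of Alice's forward move along the cycle -/
lemma forward_refute (hk : 2 ≤ k) (hd : d = 1 ∨ d = -1) {t : ℕ} (ht : t < 2*k) (ht1 : t+1 ≠ 2*k)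
    (hWin : FeedbackWin none (Rt k j d (t+1)) (Uv (wp k j d (t+1))))
    (hdisj : (Uv (wp k j d t + d)) = (none : Option (ZMod (2*k) ⊕ ZMod (4*k))) ∨
      (∀ e ∈ (Rt k j d t).erase (s((Uv (wp k j d t)), (Uv (wp k j d t + d)))),
        (Uv (wp k j d t + d)) ∉ e) ∨
      ¬ FeedbackWin none ((Rt k j d t).erase (s((Uv (wp k j d t)), (Uv (wp k j d t + d)))))
        (Uv (wp k j d t + d))) : False := by
  rw [← wp_succ] at hdisj
  rw [show (s((Uv (wp k j d t)), (Uv (wp k j d (t+1))))) = cycE k j d t from rfl,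
    Rt_erase] at hdisj
  rcases hdisj with h | hdead | hnw
  · exact absurd h (by simp)
  · apply hdead (s((Uv (wp k j d (t+1))),
      (Wv ((2 * (wp k j d (t+1)).val : ℕ) : ZMod (4*k)))))
    · refine mem_Rt.mpr ⟨mem_E0.mpr (adj_spoke _ _ (Or.inl rfl)), spoke_not_used ?_⟩
      rintro ⟨h1, -⟩
      rcases (wp_eq_iIdx hd (by omega)).mp h1 with h2 | h2 <;> omega
    · exact Sym2.mem_iff.mpr (Or.inl rfl)
  · exact hnw hWin

/-- refutation of Alice's move to an outer (spoke) vertex -/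
lemma spoke_refute (hk : 2 ≤ k) {t : ℕ} {m : ZMod (4*k)}
    (hm : m = ((2 * (wp k j d t).val : ℕ) : ZMod (4*k)) ∨
          m = ((2 * (wp k j d t).val + 1 : ℕ) : ZMod (4*k)))
    (hmem : s((Uv (wp k j d t)), (Wv m)) ∈ Rt k j d t)
    (hdisj : (Wv m) = (none : Option (ZMod (2*k) ⊕ ZMod (4*k))) ∨
      (∀ e ∈ (Rt k j d t).erase (s((Uv (wp k j d t)), (Wv m))), (Wv m) ∉ e) ∨
      ¬ FeedbackWin none ((Rt k j d t).erase (s((Uv (wp k j d t)), (Wv m)))) (Wv m)) :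
    False := by
  have hmj : m ≠ j := by
    intro hmj
    have h1 : wp k j d t = iIdx k j := by
      have := spoke_unique hm
      rwa [hmj] at this
    have h2 : s((Uv (wp k j d t)), (Wv m)) = spEdge k j := by
      rw [spEdge, h1, hmj]
    exact (mem_Rt.mp hmem).2 (h2 ▸ spEdge_mem_used)
  have hs : s((Wv m), (none : Option (ZMod (2*k) ⊕ ZMod (4*k)))) ∈
      (Rt k j d t).erase (s((Uv (wp k j d t)), (Wv m))) := by
    refine Finset.mem_erase.mpr ⟨?_, mem_Rt.mpr ⟨mem_E0.mpr (adj_start m), sEdge'_not_used hmj⟩⟩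
    simp [Sym2.eq_iff]
  rcases hdisj with h | hdead | hnw
  · exact absurd h (by simp)
  · exact hdead _ hs (Sym2.mem_iff.mpr (Or.inl rfl))
  · exact hnw (win_to_start hs)

/-- refutation at the final position `t = 2k` (Alice stuck at `u_i`) -/
lemma final_refute (hk : 2 ≤ k) (hd : d = 1 ∨ d = -1) :
    ¬ FeedbackWin none (Rt k j d (2*k)) (Uv (wp k j d (2*k))) := by
  intro hwin
  rw [FeedbackWin_iff] at hwin
  obtain ⟨v, hmem, hdisj⟩ := hwin
  have hE0 := (mem_Rt.mp hmem).1
  have hnu := (mem_Rt.mp hmem).2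
  have hadj := mem_E0.mp hE0
  rcases adj_inl_cases hadj with hv | hv | hv | hv
  · rcases pm_to_d hd (wp k j d (2*k)) (Or.inl hv) with hv' | hv'
    · subst hv'
      apply hnu
      have he : s((Uv (wp k j d (2*k))), (Uv (wp k j d (2*k) + d))) = cycE k j d 0 := by
        rw [cycE, show (0:ℕ)+1 = 1 from rfl, wp_wrap,
          show wp k j d 1 = wp k j d 0 + d from wp_succ 0]
      rw [he]
      exact cycE_mem_used (by omega)
    · subst hv'
      exact hnu (backward_used hd (by omega))
  · rcases pm_to_d hd (wp k j d (2*k)) (Or.inr hv) with hv' | hv'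
    · subst hv'
      apply hnu
      have he : s((Uv (wp k j d (2*k))), (Uv (wp k j d (2*k) + d))) = cycE k j d 0 := by
        rw [cycE, show (0:ℕ)+1 = 1 from rfl, wp_wrap,
          show wp k j d 1 = wp k j d 0 + d from wp_succ 0]
      rw [he]
      exact cycE_mem_used (by omega)
    · subst hv'
      exact hnu (backward_used hd (by omega))
  · subst hv; exact spoke_refute hk (Or.inl rfl) hmem hdisj
  · subst hv; exact spoke_refute hk (Or.inr rfl) hmem hdisj

lemma march (hk : 2 ≤ k) :
    ∀ N t (d : ZMod (2*k)), (d = 1 ∨ d = -1) → t ≤ 2*k → 2*k - t ≤ N →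
      (Even t → ¬ FeedbackWin none (Rt k j d t) (Uv (wp k j d t))) ∧
      (¬ Even t → FeedbackWin none (Rt k j d t) (Uv (wp k j d t))) := by
  intro N
  induction N with
  | zero =>
    intro t d hd ht hN
    have h2k : t = 2*k := by omega
    subst h2k
    refine ⟨fun _ => final_refute hk hd, fun hodd => absurd ⟨k, by ring⟩ hodd⟩
  | succ N IH =>
    intro t d hd ht hN
    by_cases h2k : t = 2*k
    · subst h2k
      refine ⟨fun _ => final_refute hk hd, fun hodd => absurd ⟨k, by ring⟩ hodd⟩
    · have htlt : t < 2*k := by omega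
      constructor
      · -- Alice to move
        intro hev hwin
        rw [FeedbackWin_iff] at hwin
        obtain ⟨v, hmem, hdisj⟩ := hwin
        have hE0 := (mem_Rt.mp hmem).1
        have hnu := (mem_Rt.mp hmem).2
        have hadj := mem_E0.mp hE0
        have ht1 : t + 1 ≠ 2*k := by
          rcases hev with ⟨c, hc⟩; omega
        have hfwd : ∀ hv' : v = (Uv (wp k j d t + d)), False := by
          intro hv'
          subst hv'
          have hWin : FeedbackWin none (Rt k j d (t+1)) (Uv (wp k j d (t+1))) := by
            refine (IH (t+1) d hd (by omega) (by omega)).2 ?_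
            rw [Nat.even_add_one]
            exact fun h => h hev
          exact forward_refute hk hd htlt ht1 hWin hdisj
        rcases adj_inl_cases hadj with hv | hv | hv | hv
        · rcases pm_to_d hd (wp k j d t) (Or.inl hv) with hv' | hv'
          · exact hfwd hv'
          · by_cases ht0 : t = 0
            · subst ht0
              subst hv'
              -- switch direction
              have hd' : -d = 1 ∨ -d = -1 := by
                rcases hd with rfl | rfl
                · exact Or.inr rfl
                · exact Or.inl (by norm_num)
              have hWin : FeedbackWin none (Rt k j (-d) 1) (Uv (wp k j (-d) 1)) :=
                (IH 1 (-d) hd' (by omega) (by omega)).2 (by simp)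
              rw [Rt_zero_indep (-d),
                show wp k j d 0 - d = wp k j (-d) 0 + -d from by rw [wp_zero, wp_zero]; ring,
                show wp k j d 0 = wp k j (-d) 0 from by rw [wp_zero, wp_zero]] at hdisj
              exact forward_refute hk hd' (t := 0) (by omega) (by omega) hWin hdisj
            · subst hv'
              exact hnu (backward_used hd (by omega))
        · rcases pm_to_d hd (wp k j d t) (Or.inr hv) with hv' | hv'
          · exact hfwd hv'
          · by_cases ht0 : t = 0
            · subst ht0
              subst hv'
              have hd' : -d = 1 ∨ -d = -1 := by
                rcases hd with rfl | rfl
                · exact Or.inr rfl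
                · exact Or.inl (by norm_num)
              have hWin : FeedbackWin none (Rt k j (-d) 1) (Uv (wp k j (-d) 1)) :=
                (IH 1 (-d) hd' (by omega) (by omega)).2 (by simp)
              rw [Rt_zero_indep (-d),
                show wp k j d 0 - d = wp k j (-d) 0 + -d from by rw [wp_zero, wp_zero]; ring,
                show wp k j d 0 = wp k j (-d) 0 from by rw [wp_zero, wp_zero]] at hdisj
              exact forward_refute hk hd' (t := 0) (by omega) (by omega) hWin hdisj
            · subst hv'
              exact hnu (backward_used hd (by omega))
        · subst hv; exact spoke_refute hk (Or.inl rfl) hmem hdisj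
        · subst hv; exact spoke_refute hk (Or.inr rfl) hmem hdisj
      · -- Bob to move
        intro hodd
        rw [FeedbackWin_iff]
        refine ⟨Uv (wp k j d (t+1)), ?_, Or.inr (Or.inr ?_)⟩
        · refine mem_Rt.mpr ⟨mem_E0.mpr ?_, cycE_not_used hk hd htlt⟩
          rw [wp_succ]
          exact adj_step hk hd _
        · rw [show (s((Uv (wp k j d t)), (Uv (wp k j d (t+1))))) = cycE k j d t from rfl,
            Rt_erase]
          refine (IH (t+1) d hd (by omega) (by omega)).1 (Nat.even_add_one.mpr ?_)
          exact hodd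

end


/-- For every integer `k ≥ 2`, Bob (the second player) has a
winning strategy in the feedback game on the graph `G_k` with starting vertex `s`. -/
theorem feedback_bob_wins_Gk (k : ℕ) (hk : 2 ≤ k) :
    haveI : NeZero (2 * k) := ⟨by omega⟩
    haveI : NeZero (4 * k) := ⟨by omega⟩
    BobWins (GkGraph k) (gkStart k) := by
  haveI : NeZero (2 * k) := ⟨by omega⟩
  haveI : NeZero (4 * k) := ⟨by omega⟩
  intro halice
  have h0 : FeedbackWin (gkStart k) (E0 k) (gkStart k) := halice
  rw [FeedbackWin_iff] at h0
  obtain ⟨v, hmem, hdisj⟩ := h0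
  have hmem' : s((none : GkVert k), v) ∈ E0 k := hmem
  obtain ⟨m, rfl⟩ := adj_none_cases (mem_E0.mp hmem')
  rcases hdisj with h | hdead | hnw
  · exact absurd h (by simp [gkStart])
  · apply hdead (s(some (Sum.inr m), some (Sum.inr (m+1))))
    · refine Finset.mem_erase.mpr ⟨?_, mem_E0.mpr (adj_outer_succ hk m)⟩
      simp [gkStart, Sym2.eq_iff]
    · exact Sym2.mem_iff.mpr (Or.inl rfl)
  · apply hnw
    rw [FeedbackWin_iff]
    refine ⟨some (Sum.inl (iIdx k m)), ?_, Or.inr (Or.inr ?_)⟩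
    · refine Finset.mem_erase.mpr ⟨by simp [gkStart, Sym2.eq_iff],
        mem_E0.mpr ((GkGraph k).adj_symm (adj_spoke _ _ (iIdx_spoke m)))⟩
    · have e1 : s((some (Sum.inr m) : GkVert k),
          some (Sum.inl (iIdx k m))) = spEdge k m := by
        rw [spEdge]; exact Sym2.eq_swap
      have e2 : s((gkStart k : GkVert k), some (Sum.inr m)) = sEdge k m := rfl
      rw [e2, e1, Rt_init (j := m) (d := 1)]
      have h3 := (march (j := m) hk (2*k) 0 1 (Or.inl rfl) (by omega) (by omega)).1 Even.zero
      rwa [wp_zero] at h3
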